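/- The image of the module of Kähler differentials Ω(R/k) in Ω(k(f)/k) equals J̄_f·ω, where J̄_f is the image in R of the Jacobian ideal J_f = (f_X, f_Y)A and ω is the fundamental differential. -/

import Mathlib

open scoped Classical
set_option synthInstance.maxHeartbeats 1000000
set_option maxHeartbeats 4000000

noncomputable section

namespace ZG

/-- The length of a module, defined as the supremum of lengths of chains of proper submodules. -/
noncomputable def mlen (R M : Type*) [Semiring R] [AddCommMonoid M] [Module R M] : ℕ∞ :=
  {N : Submodule R M | N < ⊤}.chainHeight (· < ·)

/-- The conductor of a subalgebra `S ⊆ K` (typically the integral closure of `R`),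
as an ideal of `S`: all `u ∈ S` with `u·S ⊆ R`. -/
def conductorIdeal (R K : Type*) [CommRing R] [CommRing K] [Algebra R K]
    (S : Subalgebra R K) : Ideal S where
  carrier := {u | ∀ w : S, ∃ r : R, (u : K) * (w : K) = algebraMap R K r}
  zero_mem' := fun w => ⟨0, by simp⟩
  add_mem' := by
    rintro a b ha hb w
    obtain ⟨r, hr⟩ := ha w
    obtain ⟨s, hs⟩ := hb w
    refine ⟨r + s, ?_⟩
    push_cast
    rw [add_mul, hr, hs]
  smul_mem' := by
    rintro c a ha w
    obtain ⟨r, hr⟩ := ha (c * w)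
    refine ⟨r, ?_⟩
    rw [smul_eq_mul]
    push_cast at hr ⊢
    linear_combination hr

/-- The conductor of a subalgebra `S ⊆ K` as an ideal of the base ring `R`:
all `r ∈ R` with `r·S ⊆ R`. -/
def conductorIn (R K : Type*) [CommRing R] [CommRing K] [Algebra R K]
    (S : Subalgebra R K) : Ideal R where
  carrier := {r | ∀ w : S, ∃ r' : R, algebraMap R K r * (w : K) = algebraMap R K r'}
  zero_mem' := fun w => ⟨0, by simp⟩
  add_mem' := by
    rintro a b ha hb w
    obtain ⟨r, hr⟩ := ha w
    obtain ⟨s, hs⟩ := hb w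
    exact ⟨r + s, by rw [map_add, add_mul, hr, hs, map_add]⟩
  smul_mem' := by
    rintro c a ha w
    obtain ⟨r', hr'⟩ := ha w
    exact ⟨c * r', by rw [smul_eq_mul, map_mul, mul_assoc, hr', ← map_mul]⟩


/-- A (normalized) discrete valuation of a `k`-algebra `K` (typically a function field),
trivial on `k`.  `v x` is the value of `x ≠ 0`, with the convention `v 0 = 0`. -/
structure DiscVal (k K : Type*) [CommRing k] [CommRing K] [Algebra k K] where
  v : K → ℤ
  v_zero : v 0 = 0
  v_mul : ∀ x y : K, x ≠ 0 → y ≠ 0 → v (x * y) = v x + v y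
  v_add : ∀ x y : K, x ≠ 0 → y ≠ 0 → x + y ≠ 0 → min (v x) (v y) ≤ v (x + y)
  exists_uniformizer : ∃ t : K, t ≠ 0 ∧ v t = 1
  v_const : ∀ c : k, algebraMap k K c ≠ 0 → v (algebraMap k K c) = 0

variable (k : Type) [Field k]

/-- The polynomial ring `A = k[X,Y]`, realized as `MvPolynomial (Fin 2) k`;
the variable `X 0` plays the role of `X` and `X 1` plays the role of `Y`. -/
abbrev P2 := MvPolynomial (Fin 2) k

/-- The Jacobian `J_f(h) = h_X f_Y - h_Y f_X`. -/
def jac (f h : P2 k) : P2 k :=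
  MvPolynomial.pderiv 0 h * MvPolynomial.pderiv 1 f
    - MvPolynomial.pderiv 1 h * MvPolynomial.pderiv 0 f

variable (f : P2 k)

/-- The coordinate ring `R = A/(f)` of the curve `f`. -/
def Crv : Type := P2 k ⧸ Ideal.span {f}

instance : CommRing (Crv k f) := Ideal.Quotient.commRing _
instance : Algebra k (Crv k f) := Ideal.Quotient.algebra k
/-- The canonical projection `φ_f : A → R`. -/
def toCrv : P2 k →+* Crv k f := Ideal.Quotient.mk _

/-- The function field `k(f)` of the curve (the fraction field of `R`). -/
def Fn : Type := FractionRing (Crv k f)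

instance : CommRing (Fn k f) := inferInstanceAs (CommRing (FractionRing (Crv k f)))
instance : Algebra (Crv k f) (Fn k f) :=
  inferInstanceAs (Algebra (Crv k f) (FractionRing (Crv k f)))
instance : Algebra k (Fn k f) := inferInstanceAs (Algebra k (FractionRing (Crv k f)))
instance : IsScalarTower k (Crv k f) (Fn k f) :=
  inferInstanceAs (IsScalarTower k (Crv k f) (FractionRing (Crv k f)))

/-- The canonical map `R → k(f)`. -/
def toFn : Crv k f →+* Fn k f := algebraMap _ _

instance : Module (Fn k f) (Ω[Fn k f⁄k]) :=
  inferInstance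

/-- The integral closure `R̄` of `R` in `k(f)`. -/
def intCl : Subalgebra (Crv k f) (Fn k f) := integralClosure (Crv k f) (Fn k f)

/-- The image `J̄_f ⊆ R` of the Jacobian ideal `J_f = (f_X, f_Y) ⊆ A`. -/
def jacIdealBar : Ideal (Crv k f) :=
  Ideal.map (toCrv k f) (Ideal.span {MvPolynomial.pderiv 0 f, MvPolynomial.pderiv 1 f})

/-- The conductor `𝔠 = 𝔠(R̄,R)`, viewed as an ideal of `R̄`. -/
def condBar : Ideal (intCl k f) := conductorIdeal (Crv k f) (Fn k f) (intCl k f)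

/-- The conductor `𝔠 = 𝔠(R̄,R)`, viewed as an ideal of `R` (recall `𝔠 ⊆ R`). -/
def condCrv : Ideal (Crv k f) := conductorIn (Crv k f) (Fn k f) (intCl k f)

/-- `C(f) = ℓ_R(R̄/𝔠)`, the (global) length of the conductor. -/
def CGlob : ℕ∞ := mlen (Crv k f) ((intCl k f) ⧸ condBar k f)

/-- `Z(f) = ℓ_R(𝔠/J̄_f)`, the (global) Zariski number. -/
def ZGlob : ℕ∞ :=
  mlen (Crv k f) (↥(condCrv k f) ⧸ Submodule.comap (condCrv k f).subtype (jacIdealBar k f))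

/-- `μ(f;A) = dim_k A/(f_X,f_Y)`, the Milnor number of the pencil `(f-a)ₐ`. -/
def muPencil : ℕ∞ :=
  mlen k (P2 k ⧸ Ideal.span {MvPolynomial.pderiv 0 f, MvPolynomial.pderiv 1 f})

/-- `ν(f) = dim_k A/(f, f_X,f_Y)`, the (global affine) Tjurina number. -/
def nuGlob : ℕ∞ :=
  mlen k (P2 k ⧸ Ideal.span {f, MvPolynomial.pderiv 0 f, MvPolynomial.pderiv 1 f})

/-- `J_f(u) = j` for `u, j ∈ k(f)`: the Jacobian of `u`, computed by the quotient rule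
from a representation `u = g(x,y)/h(x,y)`. -/
def jacRel (u j : Fn k f) : Prop :=
  ∃ g h : P2 k, toFn k f (toCrv k f h) ≠ 0 ∧
    u * toFn k f (toCrv k f h) = toFn k f (toCrv k f g) ∧
    j * (toFn k f (toCrv k f h)) ^ 2 =
      toFn k f (toCrv k f (jac k f g)) * toFn k f (toCrv k f h)
        - toFn k f (toCrv k f g) * toFn k f (toCrv k f (jac k f h))

/-- `ω` is the fundamental differential of `f`, i.e. `ω = du / J_f(u)` for one
(equivalently, any) nonconstant `u`; here expressed as `J_f(u) • ω = du` for a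
nonconstant `u = g(x,y) ∈ R` (nonconstancy being `du ≠ 0` in characteristic zero). -/
def isFundDiff (ω : Ω[Fn k f⁄k]) : Prop :=
  ∃ g : P2 k, KaehlerDifferential.D k (Fn k f) (toFn k f (toCrv k f g)) ≠ 0 ∧
    toFn k f (toCrv k f (jac k f g)) • ω =
      KaehlerDifferential.D k (Fn k f) (toFn k f (toCrv k f g))

/-- The image of `Ω(R,k)` in `Ω(k(f),k)`: the `R`-submodule generated by all `a·db`, `a,b ∈ R`. -/
def OmegaCrv : Submodule (Crv k f) (Ω[Fn k f⁄k]) :=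
  Submodule.span (Crv k f)
    {p | ∃ a b : Crv k f, p = toFn k f a • KaehlerDifferential.D k (Fn k f) (toFn k f b)}

/-- The image of `Ω(R̄,k)` in `Ω(k(f),k)`: the `R`-submodule generated by all `a·db`, `a,b ∈ R̄`. -/
def OmegaBar : Submodule (Crv k f) (Ω[Fn k f⁄k]) :=
  Submodule.span (Crv k f)
    {p | ∃ a b : intCl k f,
      p = (a : Fn k f) • KaehlerDifferential.D k (Fn k f) (b : Fn k f)}

/-- `ℓ_R(Ω(R̄,k)/Ω(R,k))`. -/
def lenOmegaQuot : ℕ∞ :=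
  mlen (Crv k f) (↥(OmegaBar k f) ⧸ Submodule.comap (OmegaBar k f).subtype (OmegaCrv k f))

/-- `ℓ_R(R̄/R)`. -/
def lenBarModCrv : ℕ∞ :=
  mlen (Crv k f) ((intCl k f) ⧸ LinearMap.range (Algebra.linearMap (Crv k f) (intCl k f)))

/-- `ℓ_R(R/𝔠)`. -/
def lenCrvModCond : ℕ∞ := mlen (Crv k f) (Crv k f ⧸ condCrv k f)


/-- The local Milnor number `μ(g;Q) = ℓ(A_Q/(g_X,g_Y)A_Q)`. -/
def muLoc (g : P2 k) (Q : Ideal (P2 k)) (hQ : Q.IsPrime) : ℕ∞ :=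
  letI := hQ
  mlen (Localization.AtPrime Q)
    (Localization.AtPrime Q ⧸ Ideal.map (algebraMap (P2 k) (Localization.AtPrime Q))
      (Ideal.span {MvPolynomial.pderiv 0 g, MvPolynomial.pderiv 1 g}))

/-- The local Tjurina number `ν(f;Q) = ℓ(A_Q/(f,f_X,f_Y)A_Q)`. -/
def nuLoc (f : P2 k) (Q : Ideal (P2 k)) (hQ : Q.IsPrime) : ℕ∞ :=
  letI := hQ
  mlen (Localization.AtPrime Q)
    (Localization.AtPrime Q ⧸ Ideal.map (algebraMap (P2 k) (Localization.AtPrime Q))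
      (Ideal.span {f, MvPolynomial.pderiv 0 f, MvPolynomial.pderiv 1 f}))

/-- The number of branches `χ(f;Q)` of `f` at `Q`: the number of maximal ideals of the
integral closure of the local ring `R_{Q'} = A_Q/(f)A_Q` of the curve at `Q`. -/
def chiLoc (f : P2 k) (Q : Ideal (P2 k)) (hQ : Q.IsPrime) : ℕ :=
  letI := hQ
  let Rq : Type := Localization.AtPrime Q ⧸
    Ideal.map (algebraMap (P2 k) (Localization.AtPrime Q)) (Ideal.span {f})
  letI : CommRing Rq := Ideal.Quotient.commRing _
  letI : CommRing (FractionRing Rq) := inferInstance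
  letI : Algebra Rq (FractionRing Rq) := inferInstance
  Nat.card {m : Ideal (integralClosure Rq (FractionRing Rq)) // m.IsMaximal}

/-- The local conductor length `C(f;Q) = ℓ(R̄_{Q'}/𝔠(f;Q))`. -/
def CLoc (f : P2 k) (Q : Ideal (P2 k)) (hQ : Q.IsPrime) : ℕ∞ :=
  letI := hQ
  let Rq : Type := Localization.AtPrime Q ⧸
    Ideal.map (algebraMap (P2 k) (Localization.AtPrime Q)) (Ideal.span {f})
  letI : CommRing Rq := Ideal.Quotient.commRing _
  letI : CommRing (FractionRing Rq) := inferInstance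
  letI : Algebra Rq (FractionRing Rq) := inferInstance
  mlen Rq ((integralClosure Rq (FractionRing Rq)) ⧸
    conductorIdeal Rq (FractionRing Rq) (integralClosure Rq (FractionRing Rq)))

/-- The local Zariski number `Z(f;Q) = ℓ(𝔠(f;Q)/J̄_f R_{Q'})`. -/
def ZLoc (f : P2 k) (Q : Ideal (P2 k)) (hQ : Q.IsPrime) : ℕ∞ :=
  letI := hQ
  let Rq : Type := Localization.AtPrime Q ⧸
    Ideal.map (algebraMap (P2 k) (Localization.AtPrime Q)) (Ideal.span {f})
  letI : CommRing Rq := Ideal.Quotient.commRing _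
  letI : CommRing (FractionRing Rq) := inferInstance
  letI : Algebra Rq (FractionRing Rq) := inferInstance
  let cq : Ideal Rq := conductorIn Rq (FractionRing Rq) (integralClosure Rq (FractionRing Rq))
  let jq : Ideal Rq := Ideal.map
    ((Ideal.Quotient.mk _).comp (algebraMap (P2 k) (Localization.AtPrime Q)))
    (Ideal.span {MvPolynomial.pderiv 0 f, MvPolynomial.pderiv 1 f})
  mlen Rq (↥cq ⧸ Submodule.comap cq.subtype jq)

/-- The points (maximal ideals of `A`) through which the curve `g` passes. -/
def ptsOn (g : P2 k) : Type := {Q : Ideal (P2 k) // Q.IsMaximal ∧ g ∈ Q}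

/-- The (affine) Milnor number `μ(g) = Σ_Q μ(g;Q)`. -/
def muSum (g : P2 k) : ℕ∞ := ∑ᶠ Q : ptsOn k g, muLoc k g Q.1 Q.2.1.isPrime

/-- The (affine) Tjurina number `ν(f) = Σ_Q ν(f;Q)` (sum of the local ones). -/
def nuSum (f : P2 k) : ℕ∞ := ∑ᶠ Q : ptsOn k f, nuLoc k f Q.1 Q.2.1.isPrime

/-- The (affine) defect `δ(f) = Σ_Q δ(f;Q) = Σ_Q (μ(f;Q) - ν(f;Q))`. -/
def deltaSum (f : P2 k) : ℕ∞ :=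
  ∑ᶠ Q : ptsOn k f, (muLoc k f Q.1 Q.2.1.isPrime - nuLoc k f Q.1 Q.2.1.isPrime)

/-- `χ̄(f) = Σ_Q (χ(f;Q) - 1)`. -/
def chibarSum (f : P2 k) : ℕ∞ :=
  ∑ᶠ Q : ptsOn k f, ((chiLoc k f Q.1 Q.2.1.isPrime - 1 : ℕ) : ℕ∞)

/-- `C(f) = Σ_Q C(f;Q)`. -/
def CSum (f : P2 k) : ℕ∞ := ∑ᶠ Q : ptsOn k f, CLoc k f Q.1 Q.2.1.isPrime

/-- `Z(f) = Σ_Q Z(f;Q)`. -/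
def ZSum (f : P2 k) : ℕ∞ := ∑ᶠ Q : ptsOn k f, ZLoc k f Q.1 Q.2.1.isPrime


/-- `f` has one place at infinity: there is exactly one valuation of `k(f)` over `k`
whose valuation ring does not contain the coordinate ring `R`. -/
def OnePlaceAtInfinity : Prop :=
  ∃! w : DiscVal k (Fn k f), ∃ r : Crv k f, r ≠ 0 ∧ w.v (toFn k f r) < 0

/-- `w` is the valuation at infinity of the curve `f`. -/
def IsPlaceAtInfinity (w : DiscVal k (Fn k f)) : Prop :=
  ∃ r : Crv k f, r ≠ 0 ∧ w.v (toFn k f r) < 0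

/-- `f` is a rational (polynomial) curve: it admits a polynomial parametrization. -/
def IsRationalCurve : Prop :=
  ∃ p q : Polynomial k, (p.natDegree ≠ 0 ∨ q.natDegree ≠ 0) ∧
    MvPolynomial.aeval ![p, q] f = 0

/-- The semigroup `Γ(f)` of values of the valuation `w` on nonzero elements of `R`. -/
def GammaSg (w : DiscVal k (Fn k f)) : Set ℤ :=
  {z | ∃ r : Crv k f, r ≠ 0 ∧ w.v (toFn k f r) = z}

/-- `c` is the conductor of the sub-semigroup `Γ ⊆ ℤ`: every integer `≤ c` belongs
to `Γ` and `c+1 ∉ Γ`. -/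
def IsSgConductor (Γ : Set ℤ) (c : ℤ) : Prop :=
  (∀ z : ℤ, z ≤ c → z ∈ Γ) ∧ c + 1 ∉ Γ



/-! ### Auxiliary lemmas for statement 2 -/

open MvPolynomial in
/-- The composite map `A → k(f)`. -/
def uu (g : P2 k) : Fn k f := toFn k f (toCrv k f g)

open MvPolynomial

theorem uu_C (a : k) : uu k f (C a) = algebraMap k (Fn k f) a := by
  rw [show uu k f (C a) = toFn k f (algebraMap k (Crv k f) a) from rfl]
  exact (IsScalarTower.algebraMap_apply k (Crv k f) (Fn k f) a).symm

theorem uu_add (p q : P2 k) : uu k f (p + q) = uu k f p + uu k f q := by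
  simp [uu, map_add]

theorem uu_mul (p q : P2 k) : uu k f (p * q) = uu k f p * uu k f q := by
  simp [uu, map_mul]

theorem uu_sub (p q : P2 k) : uu k f (p - q) = uu k f p - uu k f q := by
  simp [uu, map_sub]

local notation "DD" => KaehlerDifferential.D k (Fn k f)

/-- Chain rule for the universal derivation of `k(f)` applied to polynomial elements. -/
theorem D_chain (g : P2 k) :
    DD (uu k f g) = uu k f (pderiv 0 g) • DD (uu k f (X 0))
      + uu k f (pderiv 1 g) • DD (uu k f (X 1)) := by
  induction g using MvPolynomial.induction_on with
  | C a =>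
      rw [uu_C]
      simp [Derivation.map_algebraMap, uu]
  | add p q hp hq =>
      rw [uu_add, map_add, hp, hq, map_add, map_add, uu_add, uu_add]
      module
  | mul_X p i hp =>
      have h2 : i = 0 ∨ i = 1 := by omega
      rcases h2 with rfl | rfl
      · rw [uu_mul, Derivation.leibniz, hp, pderiv_mul, pderiv_mul, pderiv_X_self,
          pderiv_X_of_ne (by decide), mul_one, mul_zero, add_zero, uu_add, uu_mul, uu_mul]
        module
      · rw [uu_mul, Derivation.leibniz, hp, pderiv_mul, pderiv_mul, pderiv_X_self,
          pderiv_X_of_ne (by decide), mul_one, mul_zero, add_zero, uu_add, uu_mul, uu_mul]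
        module

theorem uu_f_zero : uu k f f = 0 := by
  have h : toCrv k f f = 0 := Ideal.Quotient.eq_zero_iff_mem.mpr (Ideal.subset_span rfl)
  simp [uu, h]

theorem df_zero :
    uu k f (pderiv 0 f) • DD (uu k f (X 0)) + uu k f (pderiv 1 f) • DD (uu k f (X 1)) = 0 := by
  rw [← D_chain, uu_f_zero, map_zero]

theorem uu_jac (p : P2 k) :
    uu k f (jac k f p) = uu k f (pderiv 0 p) * uu k f (pderiv 1 f)
      - uu k f (pderiv 1 p) * uu k f (pderiv 0 f) := by
  rw [jac, uu_sub, uu_mul, uu_mul]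

/-- The key identity: `d(g(x,y)) = J_f(g) • ω` for every polynomial `g`. -/
theorem D_eq_jac_smul (hf : Irreducible f) (ω : Ω[Fn k f⁄k]) (hω : isFundDiff k f ω)
    (g : P2 k) : DD (uu k f g) = uu k f (jac k f g) • ω := by
  have hprime : (Ideal.span {f} : Ideal (P2 k)).IsPrime := by
    rw [Ideal.span_singleton_prime hf.ne_zero]; exact hf.prime
  haveI : IsDomain (Crv k f) := Ideal.Quotient.isDomain (R := P2 k) (I := Ideal.span {f})
  letI : Field (Fn k f) := inferInstanceAs (Field (FractionRing (Crv k f)))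
  obtain ⟨g₀, hg₀ne, hg₀⟩ := hω
  have hg₀' : uu k f (jac k f g₀) • ω = DD (uu k f g₀) := hg₀
  have hg₀ne' : DD (uu k f g₀) ≠ 0 := hg₀ne
  have hc0 : uu k f (jac k f g₀) ≠ 0 := by
    intro h
    exact hg₀ne' (by rw [← hg₀', h, zero_smul])
  -- the identity multiplied through by the nonzero scalar `uu (jac g₀)`
  have key : uu k f (jac k f g₀) • DD (uu k f g) =
      uu k f (jac k f g₀) • (uu k f (jac k f g) • ω) := by
    have swap : uu k f (jac k f g₀) • (uu k f (jac k f g) • ω) =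
        uu k f (jac k f g) • DD (uu k f g₀) := by
      rw [← hg₀', smul_smul, smul_smul, mul_comm]
    rw [swap]
    have hsub : uu k f (jac k f g) • DD (uu k f g₀) - uu k f (jac k f g₀) • DD (uu k f g) =
        (uu k f (pderiv 0 g) * uu k f (pderiv 1 g₀) - uu k f (pderiv 0 g₀) * uu k f (pderiv 1 g)) •
          (uu k f (pderiv 0 f) • DD (uu k f (X 0)) + uu k f (pderiv 1 f) • DD (uu k f (X 1))) := by
      rw [D_chain k f g, D_chain k f g₀, uu_jac, uu_jac]
      module
    have hz : uu k f (jac k f g) • DD (uu k f g₀) - uu k f (jac k f g₀) • DD (uu k f g) = 0 := by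
      rw [hsub, df_zero, smul_zero]
    exact (sub_eq_zero.mp hz).symm
  have := key
  calc DD (uu k f g)
      = (uu k f (jac k f g₀))⁻¹ • (uu k f (jac k f g₀) • DD (uu k f g)) := by
        rw [smul_smul, inv_mul_cancel₀ hc0, one_smul]
    _ = (uu k f (jac k f g₀))⁻¹ • (uu k f (jac k f g₀) • (uu k f (jac k f g) • ω)) := by rw [key]
    _ = uu k f (jac k f g) • ω := by
        rw [smul_smul, inv_mul_cancel₀ hc0, one_smul]

/-- The map `j ↦ toFn j • ω` as an `R`-linear map. -/
def Lmap (ω : Ω[Fn k f⁄k]) : Crv k f →ₗ[Crv k f] Ω[Fn k f⁄k] where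
  toFun j := toFn k f j • ω
  map_add' a b := by simp only [map_add, add_smul]
  map_smul' r a := by
    simp only [smul_eq_mul, RingHom.id_apply, map_mul, mul_smul]
    exact algebraMap_smul (Fn k f) r (toFn k f a • ω)

/-- the image of `Ω(R/k)` in `Ω(k(f)/k)` equals `J̄_f·ω`, where `J̄_f` is the
image in `R` of the Jacobian ideal `(f_X, f_Y)` and `ω` is the fundamental differential. -/
theorem statement2 [IsAlgClosed k] [CharZero k] (hf : Irreducible f)
    (ω : Ω[Fn k f⁄k]) (hω : isFundDiff k f ω) :
    (OmegaCrv k f : Set (Ω[Fn k f⁄k])) =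
      {p | ∃ j : Crv k f, j ∈ jacIdealBar k f ∧ p = toFn k f j • ω} := by
  have main : OmegaCrv k f = Submodule.map (Lmap k f ω) (jacIdealBar k f) := by
    apply le_antisymm
    · rw [OmegaCrv]
      rw [Submodule.span_le]
      rintro p ⟨a, b, rfl⟩
      obtain ⟨g, rfl⟩ := Ideal.Quotient.mk_surjective (I := Ideal.span {f}) b
      have hD : KaehlerDifferential.D k (Fn k f)
            (toFn k f (Ideal.Quotient.mk (Ideal.span {f}) g)) =
          uu k f (jac k f g) • ω := D_eq_jac_smul k f hf ω hω g
      have hmem : a * toCrv k f (jac k f g) ∈ jacIdealBar k f := by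
        apply Ideal.mul_mem_left
        apply Ideal.mem_map_of_mem
        have : jac k f g ∈ Ideal.span {pderiv 0 f, pderiv 1 f} := by
          rw [jac]
          refine sub_mem ?_ ?_
          · exact Ideal.mul_mem_left _ _ (Ideal.subset_span (by simp))
          · exact Ideal.mul_mem_left _ _ (Ideal.subset_span (by simp))
        exact this
      refine ⟨a * toCrv k f (jac k f g), hmem, ?_⟩
      show toFn k f (a * toCrv k f (jac k f g)) • ω = _
      rw [map_mul, mul_smul, hD]
      rfl
    · rw [Submodule.map_le_iff_le_comap, jacIdealBar, Ideal.map_le_iff_le_comap,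
        Ideal.span_le]
      have hx : Lmap k f ω (toCrv k f (pderiv 0 f)) ∈ OmegaCrv k f := by
        have hD : KaehlerDifferential.D k (Fn k f) (uu k f (X 1)) =
            uu k f (jac k f (X 1)) • ω := D_eq_jac_smul k f hf ω hω (X 1)
        have hjac : jac k f (X 1) = - pderiv 0 f := by
          rw [jac, pderiv_X_self, pderiv_X_of_ne (by decide)]
          ring
        have : Lmap k f ω (toCrv k f (pderiv 0 f)) =
            - KaehlerDifferential.D k (Fn k f) (uu k f (X 1)) := by
          rw [hD, hjac, show uu k f (-(pderiv 0 f)) = - uu k f (pderiv 0 f) from by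
            simp [uu, map_neg], neg_smul, neg_neg]
          rfl
        rw [this]
        apply neg_mem
        apply Submodule.subset_span
        exact ⟨1, toCrv k f (X 1), by rw [map_one, one_smul]; rfl⟩
      have hy : Lmap k f ω (toCrv k f (pderiv 1 f)) ∈ OmegaCrv k f := by
        have hD : KaehlerDifferential.D k (Fn k f) (uu k f (X 0)) =
            uu k f (jac k f (X 0)) • ω := D_eq_jac_smul k f hf ω hω (X 0)
        have hjac : jac k f (X 0) = pderiv 1 f := by
          rw [jac, pderiv_X_self, pderiv_X_of_ne (by decide)]
          ring
        have : Lmap k f ω (toCrv k f (pderiv 1 f)) =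
            KaehlerDifferential.D k (Fn k f) (uu k f (X 0)) := by
          rw [hD, hjac]; rfl
        rw [this]
        apply Submodule.subset_span
        exact ⟨1, toCrv k f (X 0), by rw [map_one, one_smul]; rfl⟩
      rintro q (rfl | rfl)
      · exact hx
      · exact hy
  ext p
  simp only [main, SetLike.mem_coe, Submodule.mem_map, Set.mem_setOf_eq]
  constructor
  · rintro ⟨j, hj, rfl⟩
    exact ⟨j, hj, rfl⟩
  · rintro ⟨j, hj, rfl⟩
    exact ⟨j, hj, rfl⟩

end ZG
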